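/- arXiv:2203.15761 — 2 statements merged into one kernel-verified Lean document; each statement's English description precedes it below -/
import Mathlib

section
/- Let P(R) be the space of Borel probability measures on R equipped with the topology of weak convergence. The set D^free of all probability measures on R that belong to the maximum free domain of attraction is dense in P(R). -/
open MeasureTheory Filter Topology Set NNReal

/-- The cumulative distribution function of a Borel probability measure on `ℝ`:
`F(x) = μ((-∞, x])`. -/
noncomputable def distrib (μ : ProbabilityMeasure ℝ) (x : ℝ) : ℝ :=
  (μ (Set.Iic x) : ℝ≥0)

/-- The free maximum convolution of two distribution functions:
`H(x) = max {0, F(x) + G(x) - 1}`. -/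
noncomputable def freeMaxConv (F G : ℝ → ℝ) : ℝ → ℝ :=
  fun x => max 0 (F x + G x - 1)

/-- The `n`-fold free maximum convolution `F^{free ∨ n}` of a distribution function `F`
with itself (the constant function `1` is the neutral element of `freeMaxConv` on
distribution functions, so `freePow F 1 = F` pointwise for any cdf `F`). -/
noncomputable def freePow (F : ℝ → ℝ) : ℕ → ℝ → ℝ
  | 0 => fun _ => 1
  | n + 1 => freeMaxConv (freePow F n) F

/-- `μ` belongs to the maximum free domain of attraction `D^free`: there are `a n > 0`,
`b n`, and a nondegenerate limit distribution `G` such that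
`F^{free ∨ n} (a n * x + b n) → G x` at every continuity point `x` of `G`. -/
def MemFreeDomAttr (μ : ProbabilityMeasure ℝ) : Prop :=
  ∃ a b : ℕ → ℝ, (∀ n, 0 < a n) ∧
    ∃ G : ProbabilityMeasure ℝ,
      (∀ c : ℝ, (G : Measure ℝ) ≠ Measure.dirac c) ∧
      ∀ x : ℝ, ContinuousAt (distrib G) x →
        Tendsto (fun n : ℕ => freePow (distrib μ) n (a n * x + b n)) atTop (𝓝 (distrib G x))

open ProbabilityTheory Real

section Aux

lemma distrib_eq (μ : ProbabilityMeasure ℝ) (x : ℝ) :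
    distrib μ x = ((μ : Measure ℝ) (Set.Iic x)).toReal := rfl

lemma distrib_le_one (μ : ProbabilityMeasure ℝ) (x : ℝ) : distrib μ x ≤ 1 := by
  rw [distrib_eq]
  exact ENNReal.toReal_le_of_le_ofReal one_pos.le (by simpa using prob_le_one)

/-- The explicit formula for the `n`-fold free maximum convolution. -/
lemma freePow_eq (F : ℝ → ℝ) {t : ℝ} (hF : F t ≤ 1) (n : ℕ) :
    freePow F n t = max 0 ((n : ℝ) * F t - ((n : ℝ) - 1)) := by
  induction n with
  | zero => simp [freePow]
  | succ n ih =>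
    show freeMaxConv (freePow F n) F t = _
    rw [freeMaxConv, ih]
    push_cast
    rcases le_or_gt 0 ((n : ℝ) * F t - ((n : ℝ) - 1)) with h | h
    · rw [max_eq_right h]
      congr 1
      ring
    · rw [max_eq_left h.le]
      have h1 : F t - 1 ≤ 0 := by linarith
      have h2 : ((n : ℝ) + 1) * F t - ((n : ℝ) + 1 - 1) ≤ 0 := by nlinarith
      rw [max_eq_left (by linarith : 0 + F t - 1 ≤ 0), max_eq_left h2]

/-- The standard exponential distribution as a probability measure. -/
noncomputable def expProb : ProbabilityMeasure ℝ :=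
  ⟨expMeasure 1, isProbabilityMeasure_expMeasure one_pos⟩

lemma expMeasure_Iic (y : ℝ) :
    expMeasure 1 (Set.Iic y) = ENNReal.ofReal (if 0 ≤ y then 1 - Real.exp (-y) else 0) := by
  haveI := isProbabilityMeasure_expMeasure one_pos
  rw [← ofReal_cdf (expMeasure 1) y]
  have : cdf (expMeasure 1) y = if 0 ≤ y then 1 - Real.exp (-(1 * y)) else 0 :=
    cdf_expMeasure_eq one_pos y
  rw [this]
  simp

lemma distrib_expProb (x : ℝ) : distrib expProb x = max 0 (1 - Real.exp (-x)) := by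
  rw [distrib_eq]
  have : (expProb : Measure ℝ) (Set.Iic x) = expMeasure 1 (Set.Iic x) := rfl
  rw [this, expMeasure_Iic, ENNReal.toReal_ofReal']
  split_ifs with hx
  · exact max_comm _ _
  · push_neg at hx
    have h1 : Real.exp (-x) ≥ 1 := Real.one_le_exp (by linarith)
    rw [max_eq_left le_rfl, max_eq_left (by linarith)]

lemma expProb_ne_dirac (c : ℝ) : (expProb : Measure ℝ) ≠ Measure.dirac c := by
  intro h
  have h1 : (expProb : Measure ℝ) (Set.Iic c) = 1 := by
    rw [h, Measure.dirac_apply' c measurableSet_Iic]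
    simp
  have h2 : (expProb : Measure ℝ) (Set.Iic c) < 1 := by
    have : (expProb : Measure ℝ) (Set.Iic c) = expMeasure 1 (Set.Iic c) := rfl
    rw [this, expMeasure_Iic]
    apply ENNReal.ofReal_lt_one.mpr
    split_ifs with hc
    · have := Real.exp_pos (-c); linarith
    · norm_num
  exact absurd h1 h2.ne

/-- The approximating measure: truncate `μ` at `M` and attach an exponential tail of
mass `ε` starting at `M`. -/
noncomputable def truncExp (μ : ProbabilityMeasure ℝ) (ε M : ℝ) : Measure ℝ :=
  (1 - ENNReal.ofReal ε) • (μ : Measure ℝ).map (fun x => min x M)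
    + ENNReal.ofReal ε • (expMeasure 1).map (fun x => x + M)

lemma isProbabilityMeasure_truncExp (μ : ProbabilityMeasure ℝ) {ε : ℝ} (hε : ε ≤ 1) (M : ℝ) :
    IsProbabilityMeasure (truncExp μ ε M) := by
  haveI := isProbabilityMeasure_expMeasure one_pos
  haveI : IsProbabilityMeasure ((μ : Measure ℝ).map (fun x => min x M)) :=
    Measure.isProbabilityMeasure_map (Measurable.aemeasurable (by fun_prop))
  haveI : IsProbabilityMeasure ((expMeasure 1).map (fun x => x + M)) :=
    Measure.isProbabilityMeasure_map (Measurable.aemeasurable (by fun_prop))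
  constructor
  rw [truncExp, Measure.add_apply, Measure.smul_apply, Measure.smul_apply,
    measure_univ, measure_univ, smul_eq_mul, smul_eq_mul, mul_one, mul_one]
  exact tsub_add_cancel_of_le (ENNReal.ofReal_le_one.mpr hε)

/-- The approximating probability measure. -/
noncomputable def truncExpProb (μ : ProbabilityMeasure ℝ) (ε M : ℝ) (hε : ε ≤ 1) :
    ProbabilityMeasure ℝ :=
  ⟨truncExp μ ε M, isProbabilityMeasure_truncExp μ hε M⟩

lemma distrib_truncExpProb (μ : ProbabilityMeasure ℝ) {ε M t : ℝ} (hε0 : 0 ≤ ε) (hε : ε ≤ 1)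
    (ht : M ≤ t) :
    distrib (truncExpProb μ ε M hε) t = 1 - ε * Real.exp (-(t - M)) := by
  haveI := isProbabilityMeasure_expMeasure one_pos
  rw [distrib_eq]
  have hmap1 : ((μ : Measure ℝ).map (fun x => min x M)) (Set.Iic t) = 1 := by
    rw [Measure.map_apply (by fun_prop) measurableSet_Iic]
    have : (fun x : ℝ => min x M) ⁻¹' Set.Iic t = Set.univ := by
      ext x
      simp only [Set.mem_preimage, Set.mem_Iic, Set.mem_univ, iff_true]
      exact le_trans (min_le_right _ _) ht
    rw [this, measure_univ]
  have hmap2 : ((expMeasure 1).map (fun x => x + M)) (Set.Iic t)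
      = ENNReal.ofReal (1 - Real.exp (-(t - M))) := by
    rw [Measure.map_apply (by fun_prop) measurableSet_Iic]
    have : (fun x : ℝ => x + M) ⁻¹' Set.Iic t = Set.Iic (t - M) := by
      ext x
      simp only [Set.mem_preimage, Set.mem_Iic]
      exact ⟨fun h => by linarith, fun h => by linarith⟩
    rw [this, expMeasure_Iic, if_pos (by linarith)]
  have hco : (truncExpProb μ ε M hε : Measure ℝ) = truncExp μ ε M := rfl
  rw [hco, truncExp, Measure.add_apply, Measure.smul_apply, Measure.smul_apply,
    hmap1, hmap2, smul_eq_mul, smul_eq_mul, mul_one]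
  have hfin1 : (1 : ENNReal) - ENNReal.ofReal ε ≠ ⊤ :=
    (tsub_le_self.trans_lt ENNReal.one_lt_top).ne
  have hexple : Real.exp (-(t - M)) ≤ 1 :=
    Real.exp_le_one_iff.mpr (by linarith)
  rw [ENNReal.toReal_add hfin1 (by finiteness),
    ENNReal.toReal_sub_of_le (ENNReal.ofReal_le_one.mpr hε) ENNReal.one_ne_top,
    ENNReal.toReal_mul, ENNReal.toReal_one, ENNReal.toReal_ofReal hε0,
    ENNReal.toReal_ofReal (by linarith)]
  ring

lemma memFreeDomAttr_truncExpProb (μ : ProbabilityMeasure ℝ) {ε : ℝ} (M : ℝ)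
    (hε0 : 0 < ε) (hε : ε ≤ 1) :
    MemFreeDomAttr (truncExpProb μ ε M hε) := by
  refine ⟨fun _ => 1, fun n => M + Real.log (ε * n), fun n => one_pos, expProb,
    expProb_ne_dirac, fun x _ => ?_⟩
  rw [distrib_expProb]
  apply Tendsto.congr' _ tendsto_const_nhds
  have hev1 : ∀ᶠ n : ℕ in atTop, 1 ≤ n := eventually_ge_atTop 1
  have hten : Tendsto (fun n : ℕ => ε * n) atTop atTop :=
    Tendsto.const_mul_atTop hε0 tendsto_natCast_atTop_atTop
  have hev2 : ∀ᶠ n : ℕ in atTop, Real.exp (-x) ≤ ε * n := hten.eventually_ge_atTop _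
  filter_upwards [hev1, hev2] with n hn1 hn2
  have hnR : (1 : ℝ) ≤ (n : ℝ) := by exact_mod_cast hn1
  have hεn : 0 < ε * n := lt_of_lt_of_le (Real.exp_pos _) hn2
  set t := 1 * x + (M + Real.log (ε * n)) with hts
  have hlog : -x ≤ Real.log (ε * n) := by
    have := Real.log_le_log (Real.exp_pos (-x)) hn2
    rwa [Real.log_exp] at this
  have htM : M ≤ t := by rw [hts]; linarith
  have hFt : distrib (truncExpProb μ ε M hε) t = 1 - Real.exp (-x) / n := by
    rw [distrib_truncExpProb μ hε0.le hε htM]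
    have : t - M = x + Real.log (ε * n) := by rw [hts]; ring
    rw [this, neg_add, Real.exp_add, Real.exp_neg (Real.log (ε * n)), Real.exp_log hεn]
    field_simp
  rw [freePow_eq _ (distrib_le_one _ _) n, hFt]
  congr 1
  have hne : (n : ℝ) ≠ 0 := by positivity
  field_simp
  ring

end Aux

/-- The set `D^free` of distributions on `ℝ` in the maximum free domain of attraction is
dense in the space of Borel probability measures on `ℝ` with the topology of weak
convergence. -/
theorem dense_free_domain_of_attraction :
    Dense {μ : ProbabilityMeasure ℝ | MemFreeDomAttr μ} := by
  intro μ
  set ε : ℕ → ℝ := fun k => ((k : ℝ) + 1)⁻¹ with hεdef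
  have hε0 : ∀ k, 0 < ε k := fun k => by positivity
  have hε1 : ∀ k, ε k ≤ 1 := fun k => by
    rw [hεdef]
    rw [inv_le_one_iff₀]
    right; linarith [Nat.cast_nonneg (α := ℝ) k]
  set ν : ℕ → ProbabilityMeasure ℝ := fun k => truncExpProb μ (ε k) k (hε1 k) with hνdef
  have hmem : ∀ k, ν k ∈ {μ : ProbabilityMeasure ℝ | MemFreeDomAttr μ} := fun k =>
    memFreeDomAttr_truncExpProb μ k (hε0 k) (hε1 k)
  have htend : Tendsto ν atTop (𝓝 μ) := by
    rw [ProbabilityMeasure.tendsto_iff_forall_integral_tendsto]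
    intro f
    haveI := isProbabilityMeasure_expMeasure one_pos
    have hint : ∀ k : ℕ, ∫ ω, f ω ∂(ν k : Measure ℝ)
        = (1 - ε k) * (∫ x, f (min x (k : ℝ)) ∂(μ : Measure ℝ))
          + ε k * ∫ ω, f ω ∂((expMeasure 1).map (fun x => x + (k : ℝ))) := by
      intro k
      haveI : IsProbabilityMeasure ((μ : Measure ℝ).map (fun x => min x (k : ℝ))) :=
        Measure.isProbabilityMeasure_map (Measurable.aemeasurable (by fun_prop))
      haveI : IsProbabilityMeasure ((expMeasure 1).map (fun x => x + (k : ℝ))) :=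
        Measure.isProbabilityMeasure_map (Measurable.aemeasurable (by fun_prop))
      have hco : (ν k : Measure ℝ) = truncExp μ (ε k) k := rfl
      rw [hco, truncExp, integral_add_measure
          ((f.integrable _).smul_measure ((tsub_le_self.trans_lt ENNReal.one_lt_top).ne))
          ((f.integrable _).smul_measure ENNReal.ofReal_ne_top),
        integral_smul_measure, integral_smul_measure,
        ENNReal.toReal_sub_of_le (ENNReal.ofReal_le_one.mpr (hε1 k)) ENNReal.one_ne_top,
        ENNReal.toReal_one, ENNReal.toReal_ofReal (hε0 k).le,
        integral_map (Measurable.aemeasurable (by fun_prop))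
          f.continuous.aestronglyMeasurable]
      simp only [smul_eq_mul]
    -- now prove the convergence of the integrals
    have hA : Tendsto (fun k : ℕ => ∫ x, f (min x (k : ℝ)) ∂(μ : Measure ℝ)) atTop
        (𝓝 (∫ x, f x ∂(μ : Measure ℝ))) := by
      apply tendsto_integral_of_dominated_convergence (fun _ => ‖f‖)
      · intro k
        exact (f.continuous.comp (by fun_prop)).aestronglyMeasurable
      · exact integrable_const _
      · intro k
        exact Eventually.of_forall fun x => f.norm_coe_le_norm _
      · refine Eventually.of_forall fun x => ?_
        apply Tendsto.congr' _ (tendsto_const_nhds (x := f x))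
        filter_upwards [eventually_ge_atTop ⌈x⌉₊] with k hk
        have : x ≤ (k : ℝ) := (Nat.le_ceil x).trans (by exact_mod_cast hk)
        rw [min_eq_left this]
    have hε0' : Tendsto ε atTop (𝓝 0) := by
      rw [hεdef]
      exact tendsto_one_div_add_atTop_nhds_zero_nat.congr (fun n => by rw [one_div])
    have hB : Tendsto (fun k : ℕ =>
        ε k * ∫ ω, f ω ∂((expMeasure 1).map (fun x => x + (k : ℝ)))) atTop (𝓝 0) := by
      apply squeeze_zero_norm (a := fun k => ε k * ‖f‖)
      · intro k
        haveI : IsProbabilityMeasure ((expMeasure 1).map (fun x => x + (k : ℝ))) :=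
          Measure.isProbabilityMeasure_map (Measurable.aemeasurable (by fun_prop))
        rw [norm_mul, Real.norm_eq_abs, abs_of_nonneg (hε0 k).le]
        exact mul_le_mul_of_nonneg_left (f.norm_integral_le_norm _) (hε0 k).le
      · simpa using hε0'.mul_const ‖f‖
    have := ((tendsto_const_nhds (x := (1:ℝ)).sub hε0').mul hA).add hB
    simp only [sub_zero, one_mul, add_zero] at this
    exact Tendsto.congr (fun k => (hint k).symm) this
  exact mem_closure_of_tendsto htend (Eventually.of_forall hmem)
end

section
/- Let P(R) be the space of Borel probability measures on R with the topology of weak convergence. The set M = { F in P(R) : x_F < infty } of all distributions with finite right endpoint is a set of the first Baire category (i.e., meagre) in P(R). -/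
open MeasureTheory Filter Topology Set NNReal
open scoped ENNReal BoundedContinuousFunction

/-- The right endpoint `x_F = sup {x : F x < 1}` of a distribution, as an extended real. -/
noncomputable def rightEndpoint (μ : ProbabilityMeasure ℝ) : EReal :=
  sSup ((fun x : ℝ => (x : EReal)) '' {x : ℝ | distrib μ x < 1})

/-- auxiliary: the mixing coefficient -/
noncomputable def eps (k : ℕ) : ℝ≥0 := ((k : ℝ≥0) + 1)⁻¹

lemma eps_le_one (k : ℕ) : eps k ≤ 1 := by
  rw [eps]
  exact inv_le_one_of_one_le₀ le_add_self

lemma eps_pos (k : ℕ) : 0 < eps k := by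
  rw [eps]
  positivity

/-- auxiliary: the mixture `(1 - ε k) μ + ε k δ_a`. -/
noncomputable def mix (μ : ProbabilityMeasure ℝ) (a : ℝ) (k : ℕ) : ProbabilityMeasure ℝ :=
  ⟨(1 - eps k) • (μ : Measure ℝ) + (eps k) • Measure.dirac a, by
    constructor
    simp only [Measure.coe_add, Measure.coe_smul, Pi.add_apply, Pi.smul_apply,
      measure_univ, smul_eq_mul, mul_one, ENNReal.smul_def]
    rw [← ENNReal.coe_add, tsub_add_cancel_of_le (eps_le_one k), ENNReal.coe_one]⟩

lemma mix_coe (μ : ProbabilityMeasure ℝ) (a : ℝ) (k : ℕ) :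
    (mix μ a k : Measure ℝ) = (1 - eps k) • (μ : Measure ℝ) + (eps k) • Measure.dirac a := rfl

lemma integral_mix (μ : ProbabilityMeasure ℝ) (a : ℝ) (k : ℕ) (f : ℝ →ᵇ ℝ) :
    ∫ ω, f ω ∂(mix μ a k : Measure ℝ) =
      ((1 - eps k : ℝ≥0) : ℝ) * (∫ ω, f ω ∂(μ : Measure ℝ)) + ((eps k : ℝ≥0) : ℝ) * f a := by
  rw [mix_coe, integral_add_measure (f.integrable _) (f.integrable _),
    integral_smul_nnreal_measure, integral_smul_nnreal_measure, integral_dirac]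
  simp [NNReal.smul_def]

lemma coe_one_sub_eps (k : ℕ) : ((1 - eps k : ℝ≥0) : ℝ) = 1 - ((k : ℝ) + 1)⁻¹ := by
  rw [NNReal.coe_sub (eps_le_one k), eps]
  push_cast
  ring

lemma tendsto_mix (μ : ProbabilityMeasure ℝ) (a : ℝ) :
    Tendsto (fun k => mix μ a k) atTop (𝓝 μ) := by
  rw [ProbabilityMeasure.tendsto_iff_forall_integral_tendsto]
  intro f
  simp_rw [integral_mix, coe_one_sub_eps]
  have h0 : Tendsto (fun k : ℕ => ((k : ℝ) + 1)⁻¹) atTop (𝓝 0) := by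
    simpa [one_div] using tendsto_one_div_add_atTop_nhds_zero_nat (𝕜 := ℝ)
  have heps : ∀ k : ℕ, ((eps k : ℝ≥0) : ℝ) = ((k : ℝ) + 1)⁻¹ := by
    intro k; rw [eps]; push_cast; ring
  simp_rw [heps]
  have h1 : Tendsto
      (fun k : ℕ => (1 - ((k : ℝ) + 1)⁻¹) * (∫ ω, f ω ∂(μ : Measure ℝ)) + ((k : ℝ) + 1)⁻¹ * f a)
      atTop (𝓝 ((1 - 0) * (∫ ω, f ω ∂(μ : Measure ℝ)) + 0 * f a)) :=
    ((tendsto_const_nhds.sub h0).mul_const _).add (h0.mul_const _)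
  simpa using h1

lemma mix_apply_lt (μ : ProbabilityMeasure ℝ) (n : ℕ) (k : ℕ) :
    (mix μ ((n : ℝ) + 1) k : Measure ℝ) (Set.Iic (n : ℝ)) < 1 := by
  rw [mix_coe]
  have hd : Measure.dirac ((n : ℝ) + 1) (Set.Iic (n : ℝ)) = 0 := by
    rw [Measure.dirac_apply]
    simp [Set.indicator_apply]
  simp only [Measure.coe_add, Pi.add_apply, Measure.coe_smul, Pi.smul_apply, hd, smul_zero,
    add_zero, ENNReal.smul_def]
  calc ((1 - eps k : ℝ≥0) : ℝ≥0∞) * (μ : Measure ℝ) (Set.Iic (n : ℝ))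
      ≤ ((1 - eps k : ℝ≥0) : ℝ≥0∞) * 1 := by
        gcongr
        exact prob_le_one
    _ < 1 := by
        rw [mul_one]
        exact_mod_cast tsub_lt_self one_pos (eps_pos k)

/-- The set `M` of distributions on `ℝ` with finite right endpoint is meagre (of the
first Baire category) in the space of Borel probability measures on `ℝ` with the topology
of weak convergence. -/
theorem meagre_finite_rightEndpoint :
    IsMeagre {μ : ProbabilityMeasure ℝ | rightEndpoint μ < ⊤} := by
  set A : ℕ → Set (ProbabilityMeasure ℝ) :=
    fun n => {μ | (μ : Measure ℝ) (Set.Iic (n : ℝ)) = 1} with hA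
  -- each A n is closed
  have hclosed : ∀ n, IsClosed (A n) := by
    intro n
    apply IsSeqClosed.isClosed
    intro x μ hx hxt
    have h1 := ProbabilityMeasure.limsup_measure_closed_le_of_tendsto hxt
      (isClosed_Iic (a := (n : ℝ)))
    have h2 : (atTop.limsup fun k => (x k : Measure ℝ) (Set.Iic (n : ℝ))) = 1 := by
      have : (fun k => (x k : Measure ℝ) (Set.Iic (n : ℝ))) = fun _ => (1 : ℝ≥0∞) := by
        funext k; exact hx k
      rw [this, limsup_const]
    rw [h2] at h1
    exact le_antisymm prob_le_one h1
  -- each A n has empty interior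
  have hint : ∀ n, interior (A n) = ∅ := by
    intro n
    rw [Set.eq_empty_iff_forall_notMem]
    intro μ hμ
    have ht := tendsto_mix μ ((n : ℝ) + 1)
    have hev : ∀ᶠ k in atTop, mix μ ((n : ℝ) + 1) k ∈ interior (A n) :=
      ht (isOpen_interior.mem_nhds hμ)
    obtain ⟨k, hk⟩ := hev.exists
    have h3 : mix μ ((n : ℝ) + 1) k ∈ A n := interior_subset hk
    simp only [hA, Set.mem_setOf_eq] at h3
    exact absurd h3 (ne_of_lt (mix_apply_lt μ n k))
  -- each A n is meagre
  have hmeagre : ∀ n, IsMeagre (A n) := by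
    intro n
    rw [isMeagre_iff_countable_union_isNowhereDense]
    refine ⟨{A n}, ?_, countable_singleton _, by simp⟩
    intro t ht
    rw [Set.mem_singleton_iff] at ht
    subst ht
    rw [(hclosed n).isNowhereDense_iff]
    exact hint n
  -- the target set is contained in ⋃ n, A n
  have hsub : {μ : ProbabilityMeasure ℝ | rightEndpoint μ < ⊤} ⊆ ⋃ n, A n := by
    intro μ hμ
    obtain ⟨x, hx1, -⟩ := EReal.exists_between_coe_real hμ
    refine Set.mem_iUnion.2 ⟨⌈x⌉₊, ?_⟩
    by_contra hne
    have hlt1 : (μ : Measure ℝ) (Set.Iic ((⌈x⌉₊ : ℕ) : ℝ)) < 1 :=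
      lt_of_le_of_ne prob_le_one hne
    have hdist : distrib μ ((⌈x⌉₊ : ℕ) : ℝ) < 1 := by
      rw [distrib]
      have := ProbabilityMeasure.ennreal_coeFn_eq_coeFn_toMeasure μ (Set.Iic ((⌈x⌉₊ : ℕ) : ℝ))
      have h' : ((μ (Set.Iic ((⌈x⌉₊ : ℕ) : ℝ)) : ℝ≥0) : ℝ≥0∞) < 1 := by rw [this]; exact hlt1
      exact_mod_cast h'
    have hle : (((⌈x⌉₊ : ℕ) : ℝ) : EReal) ≤ rightEndpoint μ :=
      le_sSup ⟨_, hdist, rfl⟩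
    have hxle : (x : EReal) ≤ (((⌈x⌉₊ : ℕ) : ℝ) : EReal) :=
      EReal.coe_le_coe_iff.2 (Nat.le_ceil x)
    exact lt_irrefl _ (hx1.trans_le (hxle.trans hle))
  exact (isMeagre_iUnion hmeagre).mono hsub
end
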